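/- There exists an absolute constant C > 0 with the following property: for every ρ_max > 0, every measurable function ρ : ℝ² → ℝ with 0 ≤ ρ(ξ) ≤ ρ_max for all ξ and ∫_{ℝ²} ρ(ξ) dξ ≤ 1, every a ≥ 0, and every x ∈ ℝ², one has ∫_{ℝ²} ρ(ξ) · ( ln(1 + a/|x−ξ|²) )² dξ ≤ C · ( 1 + (ln(1 + a·ρ_max))² ). -/

import Mathlib

open MeasureTheory

private lemma sum_odds (n : ℕ) : ∑ j ∈ Finset.range n, (2*(j:ℝ)+1) = (n:ℝ)^2 := by
  induction n with
  | zero => simp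
  | succ n ih => rw [Finset.sum_range_succ, ih]; push_cast; ring

set_option maxHeartbeats 1600000 in
/-- Weighted L² bound for the two-dimensional logarithmic Green's-function
bound against a density of unit mass bounded by `ρmax`. -/
theorem weighted_log_green_bound_two_dim :
    ∃ C : ℝ, 0 < C ∧ ∀ ρmax : ℝ, 0 < ρmax →
      ∀ ρ : EuclideanSpace ℝ (Fin 2) → ℝ, Measurable ρ →
      (∀ ξ, 0 ≤ ρ ξ ∧ ρ ξ ≤ ρmax) →
      (∫⁻ ξ, ENNReal.ofReal (ρ ξ)) ≤ 1 →
      ∀ a : ℝ, 0 ≤ a → ∀ x : EuclideanSpace ℝ (Fin 2),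
      (∫⁻ ξ, ENNReal.ofReal (ρ ξ) *
          ENNReal.ofReal ((Real.log (1 + a / dist x ξ ^ 2)) ^ 2)) ≤
        ENNReal.ofReal (C * (1 + (Real.log (1 + a * ρmax)) ^ 2)) := by
  refine ⟨130, by norm_num, ?_⟩
  intro ρmax hρmax ρ hρm hρbd hρint a ha x
  set L := Real.log (1 + a * ρmax) with hLdef
  have hL0 : 0 ≤ L := Real.log_nonneg (by nlinarith)
  set ε : ℝ := (Real.sqrt ρmax)⁻¹ with hεdef
  have hε0 : 0 < ε := inv_pos.mpr (Real.sqrt_pos.mpr hρmax)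
  have hε2 : ε^2 * ρmax = 1 := by
    rw [hεdef, inv_pow, Real.sq_sqrt hρmax.le, inv_mul_cancel₀ hρmax.ne']
  set g : EuclideanSpace ℝ (Fin 2) → ℝ :=
    fun ξ => max 0 (Real.log (ε^2 / dist x ξ^2)) with hgdef
  have hg0 : ∀ ξ, 0 ≤ g ξ := fun ξ => le_max_left _ _
  have hgmeas : Measurable g := by
    apply measurable_const.max
    exact Real.measurable_log.comp
      (measurable_const.div ((measurable_const.dist measurable_id).pow_const 2))
  -- Step A : pointwise splitting of the logarithm
  have stepA : ∀ ξ : EuclideanSpace ℝ (Fin 2),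
      (Real.log (1 + a / dist x ξ^2))^2 ≤ 2*L^2 + 2*(g ξ)^2 := by
    intro ξ
    set r := dist x ξ with hrdef
    rcases eq_or_lt_of_le (dist_nonneg : 0 ≤ r) with h0 | hrpos
    · rw [show r = 0 from h0.symm]
      simp only [ne_eq, OfNat.ofNat_ne_zero, not_false_eq_true, zero_pow, div_zero,
        add_zero, Real.log_one]
      positivity
    · have hr2 : 0 < r^2 := by positivity
      have hlognn : 0 ≤ Real.log (1 + a / r^2) :=
        Real.log_nonneg (by nlinarith [div_nonneg ha hr2.le])
      by_cases hcase : ε^2 ≤ r^2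
      · have hfrac : a / r^2 ≤ a * ρmax := by
          have h1 : a / r^2 ≤ a / ε^2 := by gcongr
          have h2 : a / ε^2 = a * ρmax := by
            rw [div_eq_iff (by positivity : (ε:ℝ)^2 ≠ 0)]
            linear_combination a * hε2.symm
          linarith
        have hlog : Real.log (1 + a/r^2) ≤ L :=
          Real.log_le_log (by positivity) (by linarith)
        nlinarith [hg0 ξ, sq_nonneg (g ξ)]
      · push_neg at hcase
        have h1 : (1:ℝ) ≤ ε^2/r^2 := (one_le_div hr2).mpr hcase.le
        have hgε : g ξ = Real.log (ε^2/r^2) :=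
          max_eq_right (Real.log_nonneg h1)
        have h2 : a * ρmax * (ε^2/r^2) = a / r^2 := by
          rw [mul_div_assoc', mul_assoc, mul_comm ρmax, hε2, mul_one]
        have expand : (1+a*ρmax)*(ε^2/r^2) = ε^2/r^2 + a*ρmax*(ε^2/r^2) := by ring
        have hmul : 1 + a / r^2 ≤ (1 + a*ρmax) * (ε^2/r^2) := by linarith
        have hlog2 : Real.log (1 + a/r^2) ≤ L + g ξ := by
          calc Real.log (1 + a/r^2)
              ≤ Real.log ((1+a*ρmax)*(ε^2/r^2)) :=
                Real.log_le_log (by positivity) hmul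
            _ = L + Real.log (ε^2/r^2) := by
                rw [Real.log_mul (by positivity) (by positivity)]
            _ = L + g ξ := by rw [hgε]
        nlinarith [hg0 ξ, hL0, sq_nonneg (L - g ξ)]
  -- Step B : pointwise domination of g² by ball indicators
  have stepB : ∀ ξ : EuclideanSpace ℝ (Fin 2), ENNReal.ofReal ((g ξ)^2) ≤
      ∑' k : ℕ, (Metric.ball x (ε * Real.exp (-(k:ℝ)))).indicator
        (fun _ => ENNReal.ofReal (4*(2*(k:ℝ)+1))) ξ := by
    intro ξ
    set r := dist x ξ with hrdef
    by_cases hlog : Real.log (ε^2 / r^2) ≤ 0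
    · have hg : g ξ = 0 := max_eq_left hlog
      simp [hg]
    · push_neg at hlog
      have hr2pos : 0 < r^2 := by
        rcases eq_or_lt_of_le (sq_nonneg r) with h | h
        · exfalso; rw [← h, div_zero, Real.log_zero] at hlog; exact lt_irrefl 0 hlog
        · exact h
      have hrne : r ≠ 0 := by
        intro h0; rw [h0] at hr2pos; simp at hr2pos
      have hrpos : 0 < r := lt_of_le_of_ne dist_nonneg (Ne.symm hrne)
      set t := Real.log (ε / r) with htdef
      have h2t : Real.log (ε^2/r^2) = 2*t := by
        rw [← div_pow, Real.log_pow]; push_cast; ring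
      have ht0 : 0 < t := by rw [h2t] at hlog; linarith
      have hgval : g ξ = 2*t := by
        rw [hgdef]; simp only []
        rw [max_eq_right hlog.le, h2t]
      set n := Nat.ceil t with hndef
      have htn : t ≤ (n:ℝ) := Nat.le_ceil t
      have hmem : ∀ j : ℕ, j < n → ξ ∈ Metric.ball x (ε * Real.exp (-(j:ℝ))) := by
        intro j hj
        have hjt : ((j:ℝ)) < t := Nat.lt_ceil.mp hj
        have hexplog : ε / r = Real.exp t := (Real.exp_log (by positivity)).symm
        have hexp : Real.exp (j:ℝ) < ε / r := by
          rw [hexplog]; exact Real.exp_lt_exp.mpr hjt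
        have h3 : Real.exp (j:ℝ) * r < ε := (lt_div_iff₀ hrpos).mp hexp
        have h4 : r < ε * Real.exp (-(j:ℝ)) := by
          rw [Real.exp_neg, ← div_eq_mul_inv, lt_div_iff₀ (Real.exp_pos _)]
          linarith [h3]
        rw [Metric.mem_ball, dist_comm]
        exact h4
      calc ENNReal.ofReal ((g ξ)^2)
          ≤ ENNReal.ofReal (4*(n:ℝ)^2) := by
            apply ENNReal.ofReal_le_ofReal
            rw [hgval]
            nlinarith [htn, ht0.le]
        _ = ∑ j ∈ Finset.range n, ENNReal.ofReal (4*(2*(j:ℝ)+1)) := by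
            rw [← ENNReal.ofReal_sum_of_nonneg (fun j _ => by positivity)]
            congr 1
            rw [← Finset.mul_sum, sum_odds]
        _ = ∑ j ∈ Finset.range n,
              (Metric.ball x (ε * Real.exp (-(j:ℝ)))).indicator
                (fun _ => ENNReal.ofReal (4*(2*(j:ℝ)+1))) ξ := by
            refine Finset.sum_congr rfl fun j hj => ?_
            rw [Set.indicator_of_mem (hmem j (Finset.mem_range.mp hj))]
        _ ≤ _ := ENNReal.sum_le_tsum _
  -- volume of balls
  have hvol : ∀ r : ℝ, 0 ≤ r →
      volume (Metric.ball x r) ≤ ENNReal.ofReal (4 * r^2) := by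
    intro r hr
    rw [EuclideanSpace.volume_ball]
    have hcard : Fintype.card (Fin 2) = 2 := Fintype.card_fin 2
    rw [hcard]
    have hΓ : ((2:ℕ):ℝ)/2 + 1 = 2 := by norm_num
    have : Real.sqrt Real.pi ^ 2 / Real.Gamma (((2:ℕ):ℝ)/2 + 1) = Real.pi := by
      rw [hΓ, Real.Gamma_two, Real.sq_sqrt Real.pi_nonneg, div_one]
    rw [this]
    rw [← ENNReal.ofReal_pow hr, ← ENNReal.ofReal_mul (by positivity)]
    apply ENNReal.ofReal_le_ofReal
    nlinarith [Real.pi_le_four, sq_nonneg r]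
  -- key radial estimate
  have hg2meas : Measurable fun ξ => ENNReal.ofReal ((g ξ)^2) :=
    ENNReal.measurable_ofReal.comp (hgmeas.pow_const 2)
  have key : (∫⁻ ξ, ENNReal.ofReal ((g ξ)^2)) ≤ ENNReal.ofReal (64 * ε^2) := by
    have termbound : ∀ k : ℕ,
        ENNReal.ofReal (4*(2*(k:ℝ)+1)) * volume (Metric.ball x (ε * Real.exp (-(k:ℝ))))
          ≤ ENNReal.ofReal (32*ε^2) * (ENNReal.ofReal 2⁻¹)^k := by
      intro k
      have hb := hvol (ε * Real.exp (-(k:ℝ))) (by positivity)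
      set E := Real.exp (-(k:ℝ)) with hEdef
      have hEpos : 0 < E := Real.exp_pos _
      have hEe : E * Real.exp (k:ℝ) = 1 := by
        rw [hEdef, ← Real.exp_add]; simp
      have hk1 : (k:ℝ) + 1 ≤ Real.exp (k:ℝ) := Real.add_one_le_exp _
      have h2k : (2:ℝ)^k ≤ Real.exp (k:ℝ) := by
        calc (2:ℝ)^k ≤ (Real.exp 1)^k := by
              apply pow_le_pow_left₀ (by norm_num)
              nlinarith [Real.add_one_le_exp (1:ℝ)]
          _ = Real.exp (k:ℝ) := by
              rw [← Real.exp_nat_mul]; ring_nf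
      have hE1 : E ≤ (2:ℝ)⁻¹^k := by
        rw [hEdef, Real.exp_neg, inv_pow]
        exact inv_anti₀ (by positivity) h2k
      have hE2 : (2*(k:ℝ)+1) * E ≤ 2 := by
        nlinarith [mul_le_mul_of_nonneg_right hk1 hEpos.le]
      calc ENNReal.ofReal (4*(2*(k:ℝ)+1)) * volume (Metric.ball x (ε * E))
          ≤ ENNReal.ofReal (4*(2*(k:ℝ)+1)) * ENNReal.ofReal (4*(ε*E)^2) :=
            mul_le_mul_right hb _
        _ = ENNReal.ofReal ((4*(2*(k:ℝ)+1)) * (4*(ε*E)^2)) :=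
            (ENNReal.ofReal_mul (by positivity)).symm
        _ ≤ ENNReal.ofReal (32*ε^2 * (2:ℝ)⁻¹^k) := by
            apply ENNReal.ofReal_le_ofReal
            have hpk : (0:ℝ) ≤ (2:ℝ)⁻¹^k := by positivity
            nlinarith [mul_le_mul hE2 hE1 hEpos.le (by norm_num : (0:ℝ) ≤ 2), sq_nonneg ε,
              hEpos.le, hpk]
        _ = ENNReal.ofReal (32*ε^2) * (ENNReal.ofReal 2⁻¹)^k := by
            rw [ENNReal.ofReal_mul (by positivity), ENNReal.ofReal_pow (by norm_num)]
    calc (∫⁻ ξ, ENNReal.ofReal ((g ξ)^2))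
        ≤ ∫⁻ ξ, ∑' k : ℕ, (Metric.ball x (ε * Real.exp (-(k:ℝ)))).indicator
            (fun _ => ENNReal.ofReal (4*(2*(k:ℝ)+1))) ξ := lintegral_mono stepB
      _ = ∑' k : ℕ, ∫⁻ ξ, (Metric.ball x (ε * Real.exp (-(k:ℝ)))).indicator
            (fun _ => ENNReal.ofReal (4*(2*(k:ℝ)+1))) ξ :=
          lintegral_tsum fun k =>
            (measurable_const.indicator Metric.isOpen_ball.measurableSet).aemeasurable
      _ = ∑' k : ℕ, ENNReal.ofReal (4*(2*(k:ℝ)+1)) *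
            volume (Metric.ball x (ε * Real.exp (-(k:ℝ)))) :=
          tsum_congr fun k => lintegral_indicator_const Metric.isOpen_ball.measurableSet _
      _ ≤ ∑' k : ℕ, ENNReal.ofReal (32*ε^2) * (ENNReal.ofReal 2⁻¹)^k :=
          ENNReal.tsum_le_tsum termbound
      _ = ENNReal.ofReal (32*ε^2) * ∑' k : ℕ, (ENNReal.ofReal 2⁻¹)^k :=
          ENNReal.tsum_mul_left
      _ ≤ ENNReal.ofReal (64 * ε^2) := by
          have h12 : ENNReal.ofReal (2:ℝ)⁻¹ = 2⁻¹ := by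
            rw [ENNReal.ofReal_inv_of_pos (by norm_num)]
            norm_num
          rw [h12, ENNReal.tsum_geometric, ENNReal.one_sub_inv_two, inv_inv]
          rw [(show (2:ENNReal) = ENNReal.ofReal 2 by norm_num),
            ← ENNReal.ofReal_mul (by positivity)]
          apply ENNReal.ofReal_le_ofReal
          nlinarith [sq_nonneg ε]
  -- assembling
  have hg2meas' : Measurable fun ξ => ENNReal.ofReal (2*(g ξ)^2) :=
    ENNReal.measurable_ofReal.comp ((hgmeas.pow_const 2).const_mul 2)
  calc (∫⁻ ξ, ENNReal.ofReal (ρ ξ) *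
          ENNReal.ofReal ((Real.log (1 + a / dist x ξ ^ 2)) ^ 2))
      ≤ ∫⁻ ξ, (ENNReal.ofReal (ρ ξ) * ENNReal.ofReal (2*L^2)
          + ENNReal.ofReal ρmax * ENNReal.ofReal (2*(g ξ)^2)) := by
        apply lintegral_mono
        intro ξ
        have hA : ENNReal.ofReal ((Real.log (1 + a / dist x ξ ^ 2)) ^ 2)
            ≤ ENNReal.ofReal (2*L^2) + ENNReal.ofReal (2*(g ξ)^2) := by
          rw [← ENNReal.ofReal_add (by positivity) (by positivity)]
          exact ENNReal.ofReal_le_ofReal (stepA ξ)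
        calc ENNReal.ofReal (ρ ξ) * ENNReal.ofReal ((Real.log (1 + a / dist x ξ ^ 2)) ^ 2)
            ≤ ENNReal.ofReal (ρ ξ) *
              (ENNReal.ofReal (2*L^2) + ENNReal.ofReal (2*(g ξ)^2)) :=
              mul_le_mul_right hA _
          _ = ENNReal.ofReal (ρ ξ) * ENNReal.ofReal (2*L^2)
              + ENNReal.ofReal (ρ ξ) * ENNReal.ofReal (2*(g ξ)^2) := mul_add _ _ _
          _ ≤ ENNReal.ofReal (ρ ξ) * ENNReal.ofReal (2*L^2)
              + ENNReal.ofReal ρmax * ENNReal.ofReal (2*(g ξ)^2) :=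
              add_le_add_right
                (mul_le_mul_left (ENNReal.ofReal_le_ofReal (hρbd ξ).2) _) _
    _ = (∫⁻ ξ, ENNReal.ofReal (ρ ξ) * ENNReal.ofReal (2*L^2))
        + ∫⁻ ξ, ENNReal.ofReal ρmax * ENNReal.ofReal (2*(g ξ)^2) :=
        lintegral_add_left ((ENNReal.measurable_ofReal.comp hρm).mul_const _) _
    _ ≤ ENNReal.ofReal (2*L^2) + ENNReal.ofReal 128 := by
        apply add_le_add
        · calc ∫⁻ ξ, ENNReal.ofReal (ρ ξ) * ENNReal.ofReal (2*L^2)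
              = (∫⁻ ξ, ENNReal.ofReal (ρ ξ)) * ENNReal.ofReal (2*L^2) :=
                lintegral_mul_const _ (ENNReal.measurable_ofReal.comp hρm)
            _ ≤ 1 * ENNReal.ofReal (2*L^2) := mul_le_mul_left hρint _
            _ = ENNReal.ofReal (2*L^2) := one_mul _
        · rw [lintegral_const_mul _ hg2meas']
          have h2 : (∫⁻ ξ, ENNReal.ofReal (2*(g ξ)^2))
              ≤ ENNReal.ofReal 2 * ENNReal.ofReal (64 * ε^2) := by
            simp_rw [ENNReal.ofReal_mul (by norm_num : (0:ℝ) ≤ 2)]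
            rw [lintegral_const_mul _ hg2meas]
            exact mul_le_mul_right key _
          calc ENNReal.ofReal ρmax * ∫⁻ ξ, ENNReal.ofReal (2*(g ξ)^2)
              ≤ ENNReal.ofReal ρmax * (ENNReal.ofReal 2 * ENNReal.ofReal (64 * ε^2)) :=
              mul_le_mul_right h2 _
            _ = ENNReal.ofReal (ρmax * (2 * (64 * ε^2))) := by
                rw [ENNReal.ofReal_mul hρmax.le, ENNReal.ofReal_mul (by norm_num : (0:ℝ) ≤ 2)]
            _ = ENNReal.ofReal 128 := by
                congr 1
                linear_combination 128 * hε2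
    _ ≤ ENNReal.ofReal (130 * (1 + L^2)) := by
        rw [← ENNReal.ofReal_add (by positivity) (by norm_num)]
        apply ENNReal.ofReal_le_ofReal
        nlinarith [sq_nonneg L]
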